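/- Let V be a finite-dimensional real vector space with dual space V∨, T > 0, and let α ∈ V, α∨ ∈ V∨ satisfy α∨(α) = 2. (a) For every continuous path π : [0,T] → V with π(0) = 0, the number x := −inf_{0≤t≤T} α∨(π(t)) satisfies 0 ≤ x ≤ α∨((P_α π)(T)). (b) Conversely, let η : [0,T] → V be continuous with η(0) = 0 and α∨(η(t)) ≥ 0 for all t ∈ [0,T], and let x ∈ [0, α∨(η(T))]. Then there exists a unique continuous path π : [0,T] → V with π(0) = 0 such that P_α π = η and −inf_{0≤t≤T} α∨(π(t)) = x; moreover this π is given by π(t) = η(t) − min( x , inf_{t≤s≤T} α∨(η(s)) ) · α. -/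

import Mathlib

open Set Filter Topology

open Set Filter Topology in
lemma runInf_img_ne {h : ℝ → ℝ} {a b : ℝ} (hab : a ≤ b) : (h '' Icc a b).Nonempty :=
  ⟨h a, a, ⟨le_refl a, hab⟩, rfl⟩

open Set Filter Topology in
lemma runInf_bdd {h : ℝ → ℝ} {a b : ℝ} (hc : ContinuousOn h (Icc a b)) :
    BddBelow (h '' Icc a b) :=
  (isCompact_Icc.image_of_continuousOn hc).bddBelow

open Set Filter Topology in
lemma runInf_cont {T : ℝ} (hT : 0 ≤ T) {h : ℝ → ℝ} (hc : ContinuousOn h (Icc 0 T)) :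
    ContinuousOn (fun t => sInf (h '' Icc 0 t)) (Icc 0 T) := by
  rw [Metric.continuousOn_iff]
  intro x hx ε hε
  obtain ⟨δ, hδ, hδ'⟩ := Metric.uniformContinuousOn_iff.mp
    (isCompact_Icc.uniformContinuousOn_of_continuous hc) (ε / 2) (by linarith)
  refine ⟨δ, hδ, fun y hy hdist => ?_⟩
  have key : ∀ p ∈ Icc (0:ℝ) T, ∀ q ∈ Icc (0:ℝ) T, p ≤ q → q - p < δ →
      sInf (h '' Icc 0 q) ≤ sInf (h '' Icc 0 p) ∧
      sInf (h '' Icc 0 p) ≤ sInf (h '' Icc 0 q) + ε / 2 := by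
    intro p hp q hq hpq hqp
    have hcp : ContinuousOn h (Icc 0 p) := hc.mono (Icc_subset_Icc_right hp.2)
    have hcq : ContinuousOn h (Icc 0 q) := hc.mono (Icc_subset_Icc_right hq.2)
    constructor
    · exact csInf_le_csInf (runInf_bdd hcq) (runInf_img_ne hp.1)
        (image_mono (Icc_subset_Icc_right hpq))
    · obtain ⟨u, hu, huq⟩ := isCompact_Icc.exists_sInf_image_eq (nonempty_Icc.2 hq.1) hcq
      rcases le_total u p with hup | hup
      · have : sInf (h '' Icc 0 p) ≤ h u := csInf_le (runInf_bdd hcp) ⟨u, ⟨hu.1, hup⟩, rfl⟩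
        rw [← huq] at this; linarith
      · have h1 : sInf (h '' Icc 0 p) ≤ h p := csInf_le (runInf_bdd hcp) ⟨p, ⟨hp.1, le_refl p⟩, rfl⟩
        have h2 : dist (h p) (h u) < ε / 2 := by
          apply hδ' p hp u ⟨hu.1, hu.2.trans hq.2⟩
          rw [Real.dist_eq, abs_lt]
          constructor <;> [linarith [hu.2]; linarith]
        rw [Real.dist_eq, abs_lt] at h2
        rw [huq]; linarith
  rw [Real.dist_eq, abs_lt] at hdist
  rw [Real.dist_eq, abs_lt]
  rcases le_total x y with hxy | hxy
  · obtain ⟨k1, k2⟩ := key x hx y hy hxy (by linarith)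
    constructor <;> linarith
  · obtain ⟨k1, k2⟩ := key y hy x hx hxy (by linarith)
    constructor <;> linarith



/-- The Pitman transform associated with a pair `(α, α∨)`:
`P_α π (t) = π t − (inf_{0 ≤ s ≤ t} α∨(π s)) • α`. -/
noncomputable def pitman {V : Type*} [AddCommGroup V] [Module ℝ V]
    (α : V) (αv : Module.Dual ℝ V) (π : ℝ → V) : ℝ → V :=
  fun t => π t - sInf ((fun s => αv (π s)) '' Set.Icc 0 t) • α

/-- Proposition 2.2 (iv) of Biane–Bougerol–O'Connell:
(a) for a path `π`, the number `x = −inf_{[0,T]} α∨(π)` lies in `[0, α∨(P_α π (T))]`;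
(b) conversely, given a path `η` with `η 0 = 0`, `α∨(η t) ≥ 0` on `[0,T]`, and
`x ∈ [0, α∨(η T)]`, there is a unique path `π` with `P_α π = η` and
`−inf_{[0,T]} α∨(π) = x`, given by `π t = η t − min(x, inf_{t ≤ s ≤ T} α∨(η s)) • α`. -/
theorem pitman_inverse
    {V : Type*} [NormedAddCommGroup V] [NormedSpace ℝ V] [FiniteDimensional ℝ V]
    (T : ℝ) (hT : 0 < T) (α : V) (αv : Module.Dual ℝ V) (hpair : αv α = 2) :
    (∀ π : ℝ → V, ContinuousOn π (Set.Icc 0 T) → π 0 = 0 →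
      0 ≤ -sInf ((fun s => αv (π s)) '' Set.Icc 0 T) ∧
      -sInf ((fun s => αv (π s)) '' Set.Icc 0 T) ≤ αv (pitman α αv π T)) ∧
    (∀ η : ℝ → V, ContinuousOn η (Set.Icc 0 T) → η 0 = 0 →
      (∀ t ∈ Set.Icc 0 T, 0 ≤ αv (η t)) →
      ∀ x ∈ Set.Icc 0 (αv (η T)),
      (ContinuousOn (fun t => η t - min x (sInf ((fun s => αv (η s)) '' Set.Icc t T)) • α)
          (Set.Icc 0 T) ∧
        (fun t => η t - min x (sInf ((fun s => αv (η s)) '' Set.Icc t T)) • α) 0 = 0 ∧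
        (∀ t ∈ Set.Icc 0 T,
          pitman α αv
            (fun t => η t - min x (sInf ((fun s => αv (η s)) '' Set.Icc t T)) • α) t = η t) ∧
        -sInf ((fun t => αv (η t - min x (sInf ((fun s => αv (η s)) '' Set.Icc t T)) • α)) ''
            Set.Icc 0 T) = x) ∧
      (∀ π : ℝ → V, ContinuousOn π (Set.Icc 0 T) → π 0 = 0 →
        (∀ t ∈ Set.Icc 0 T, pitman α αv π t = η t) →
        -sInf ((fun s => αv (π s)) '' Set.Icc 0 T) = x →
        ∀ t ∈ Set.Icc 0 T,
          π t = η t - min x (sInf ((fun s => αv (η s)) '' Set.Icc t T)) • α)) := by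
  have hαv : Continuous (αv : V → ℝ) := αv.continuous_of_finiteDimensional
  constructor
  · intro π hπ hπ0
    have hcπ : ContinuousOn (fun s => αv (π s)) (Icc 0 T) := hαv.comp_continuousOn hπ
    have hbdd := (isCompact_Icc.image_of_continuousOn hcπ).bddBelow
    have h0 : sInf ((fun s => αv (π s)) '' Icc 0 T) ≤ 0 := by
      have := csInf_le hbdd ⟨0, ⟨le_refl 0, hT.le⟩, rfl⟩
      simpa [hπ0] using this
    have hTle : sInf ((fun s => αv (π s)) '' Icc 0 T) ≤ αv (π T) :=
      csInf_le hbdd ⟨T, ⟨hT.le, le_refl T⟩, rfl⟩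
    refine ⟨by linarith, ?_⟩
    simp only [pitman, map_sub, map_smul, smul_eq_mul, hpair]
    linarith
  · intro η hη hη0 hpos x hx
    set h : ℝ → ℝ := fun s => αv (η s) with hh
    have hc : ContinuousOn h (Icc 0 T) := hαv.comp_continuousOn hη
    set m : ℝ → ℝ := fun t => sInf (h '' Icc t T) with hm
    constructor
    · set g : ℝ → ℝ := fun t => min x (m t) with hg
      have hc_t : ∀ t ∈ Icc (0:ℝ) T, ContinuousOn h (Icc t T) :=
        fun t ht => hc.mono (Icc_subset_Icc_left ht.1)
      have hm_le : ∀ t ∈ Icc (0:ℝ) T, m t ≤ h t :=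
        fun t ht => csInf_le (runInf_bdd (hc_t t ht)) ⟨t, ⟨le_refl t, ht.2⟩, rfl⟩
      have hm_nonneg : ∀ t ∈ Icc (0:ℝ) T, 0 ≤ m t := fun t ht =>
        le_csInf (runInf_img_ne ht.2) (by rintro y ⟨s, hs, rfl⟩; exact hpos s ⟨ht.1.trans hs.1, hs.2⟩)
      have hm_mono : ∀ s ∈ Icc (0:ℝ) T, ∀ t ∈ Icc (0:ℝ) T, s ≤ t → m s ≤ m t := by
        intro s hs t ht hst
        exact csInf_le_csInf (runInf_bdd (hc_t s hs)) (runInf_img_ne ht.2)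
          (image_mono (Icc_subset_Icc_left hst))
      have hg_nonneg : ∀ t ∈ Icc (0:ℝ) T, 0 ≤ g t := fun t ht => le_min hx.1 (hm_nonneg t ht)
      have hg_le_m : ∀ t, g t ≤ m t := fun t => min_le_right _ _
      have hg_mono : ∀ s ∈ Icc (0:ℝ) T, ∀ t ∈ Icc (0:ℝ) T, s ≤ t → g s ≤ g t :=
        fun s hs t ht hst => min_le_min (le_refl x) (hm_mono s hs t ht hst)
      have hh0 : h 0 = 0 := by simp [hh, hη0]
      have hg0 : g 0 = 0 := by
        have h1 : m 0 ≤ 0 := (hm_le 0 ⟨le_refl 0, hT.le⟩).trans_eq hh0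
        have h2 : 0 ≤ m 0 := hm_nonneg 0 ⟨le_refl 0, hT.le⟩
        simp [hg, le_antisymm h1 h2, hx.1]
      -- continuity of m via reflection
      have hmaps : MapsTo (fun s : ℝ => T - s) (Icc 0 T) (Icc 0 T) := by
        intro s hs
        simp only [mem_Icc] at hs ⊢
        constructor <;> linarith
      have hc' : ContinuousOn (fun s => h (T - s)) (Icc 0 T) :=
        hc.comp ((continuous_const.sub continuous_id).continuousOn) hmaps
      have hrefl : ∀ t ∈ Icc (0:ℝ) T, (fun s => h (T - s)) '' Icc 0 (T - t) = h '' Icc t T := by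
        intro t ht
        have e1 : (fun s : ℝ => h (T - s)) = h ∘ (fun s : ℝ => T - s) := rfl
        rw [e1, image_comp, image_const_sub_Icc]
        norm_num
      have hm_cont : ContinuousOn m (Icc 0 T) := by
        have h1 : ContinuousOn (fun t => sInf ((fun s => h (T - s)) '' Icc 0 (T - t))) (Icc 0 T) :=
          (runInf_cont hT.le hc').comp ((continuous_const.sub continuous_id).continuousOn) hmaps
        exact h1.congr (fun t ht => by beta_reduce; rw [hrefl t ht])
      have hπ_cont : ContinuousOn (fun t => η t - g t • α) (Icc 0 T) :=
        hη.sub ((continuousOn_const.inf hm_cont).smul continuousOn_const)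
      -- value of αv on the candidate path
      have hval : ∀ s, αv (η s - g s • α) = h s - 2 * g s := by
        intro s; simp [hh, map_sub, map_smul, smul_eq_mul, hpair]; ring
      -- key: running infimum of the candidate path equals -(g t)
      have hkey : ∀ t ∈ Icc (0:ℝ) T,
          sInf ((fun s => αv (η s - g s • α)) '' Icc 0 t) = -(g t) := by
        intro t ht
        have hsub : Icc (0:ℝ) t ⊆ Icc 0 T := Icc_subset_Icc_right ht.2
        have hcπ : ContinuousOn (fun s => αv (η s - g s • α)) (Icc 0 t) :=
          (hαv.comp_continuousOn hπ_cont).mono hsub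
        refine le_antisymm ?_ ?_
        · -- find u attaining -(g t)
          have hc_le_x : g t ≤ x := min_le_left _ _
          have hc_le_mt : g t ≤ m t := min_le_right _ _
          set S : Set ℝ := Icc 0 t ∩ h ⁻¹' (Iic (g t)) with hS
          have hS_closed : IsClosed S :=
            (hc.mono hsub).preimage_isClosed_of_isClosed isClosed_Icc isClosed_Iic
          have hS_ne : S.Nonempty := ⟨0, ⟨le_refl 0, ht.1⟩, by
            simp only [mem_preimage, mem_Iic, hh0]; exact hg_nonneg t ht⟩
          have hS_bdd : BddAbove S := (isCompact_Icc.bddAbove).mono (inter_subset_left)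
          set u := sSup S with hu_def
          have hu : u ∈ S := hS_closed.csSup_mem hS_ne hS_bdd
          have hu_mem : u ∈ Icc 0 t := hu.1
          have hu_le : h u ≤ g t := hu.2
          have hu0T : u ∈ Icc 0 T := hsub hu_mem
          have hugt : ∀ s, u < s → s ≤ t → g t < h s := by
            intro s hus hst
            by_contra hle
            push_neg at hle
            have hsS : s ∈ S := ⟨⟨hu_mem.1.trans hus.le, hst⟩, hle⟩
            exact absurd (le_csSup hS_bdd hsS) (not_le.mpr hus)
          have hhu_ge : g t ≤ h u := by
            rcases eq_or_lt_of_le hu_mem.2 with heq | hlt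
            · calc g t ≤ m t := hc_le_mt
                _ ≤ h t := hm_le t ht
                _ = h u := by rw [heq]
            · have hne : (𝓝[Ioc u t] u).NeBot :=
                neBot_of_le (f := 𝓝[>] u) (nhdsWithin_le_of_mem (Ioc_mem_nhdsGT hlt))
              have tend : Tendsto h (𝓝[Ioc u t] u) (𝓝 (h u)) :=
                (hc u hu0T).mono (fun s hs => ⟨hu_mem.1.trans hs.1.le, hs.2.trans ht.2⟩)
              have hev : ∀ᶠ s in 𝓝[Ioc u t] u, g t ≤ h s :=
                eventually_mem_nhdsWithin.mono (fun s hs => (hugt s hs.1 hs.2).le)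
              exact ge_of_tendsto tend hev
          have hhu : h u = g t := le_antisymm hu_le hhu_ge
          have hmu : m u = g t := by
            refine le_antisymm ((hm_le u hu0T).trans_eq hhu) (le_csInf (runInf_img_ne hu0T.2) ?_)
            rintro y ⟨s, hs, rfl⟩
            rcases le_total s t with hst | hts
            · rcases eq_or_lt_of_le hs.1 with heq | hlt
              · rw [← heq, hhu]
              · exact (hugt s hlt hst).le
            · exact hc_le_mt.trans (csInf_le (runInf_bdd (hc_t t ht)) ⟨s, ⟨hts, hs.2⟩, rfl⟩)
          have hgu : g u = g t := by
            rw [hg]; simp only; rw [hmu]; exact min_eq_right hc_le_x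
          refine csInf_le (runInf_bdd hcπ) ⟨u, hu_mem, ?_⟩
          simp only [hval u]
          rw [hhu, hgu]; ring
        · refine le_csInf (runInf_img_ne ht.1) ?_
          rintro y ⟨s, hs, rfl⟩
          have hs0T : s ∈ Icc 0 T := hsub hs
          have h1 : g s ≤ h s := (hg_le_m s).trans (hm_le s hs0T)
          have h2 : g s ≤ g t := hg_mono s hs0T t ht hs.2
          simp only [hval s]
          linarith
      refine ⟨hπ_cont, ?_, ?_, ?_⟩
      · show η 0 - g 0 • α = 0
        rw [hg0, hη0]; simp
      · intro t ht
        show (fun t => η t - g t • α) t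
            - sInf ((fun s => αv (η s - g s • α)) '' Icc 0 t) • α = η t
        rw [hkey t ht]
        simp only [neg_smul, sub_neg_eq_add, sub_add_cancel]
      · show -sInf ((fun s => αv (η s - g s • α)) '' Icc 0 T) = x
        rw [hkey T ⟨hT.le, le_refl T⟩]
        have hmT : m T = h T := by rw [hm]; simp [Icc_self]
        have hgT : g T = x := by
          rw [hg]; simp only; rw [hmT]; exact min_eq_left hx.2
        rw [hgT, neg_neg]
    · have hc_t : ∀ t ∈ Icc (0:ℝ) T, ContinuousOn h (Icc t T) :=
        fun t ht => hc.mono (Icc_subset_Icc_left ht.1)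
      intro π hπ hπ0 hPeq hInfx t ht
      set p : ℝ → ℝ := fun s => αv (π s) with hp
      have hcp : ContinuousOn p (Icc 0 T) := hαv.comp_continuousOn hπ
      set f : ℝ → ℝ := fun t => sInf (p '' Icc 0 t) with hf
      have hcp_t : ∀ t ∈ Icc (0:ℝ) T, ContinuousOn p (Icc 0 t) :=
        fun t ht => hcp.mono (Icc_subset_Icc_right ht.2)
      have hf_le : ∀ t ∈ Icc (0:ℝ) T, ∀ s ∈ Icc 0 t, f t ≤ p s :=
        fun t ht s hs => csInf_le (runInf_bdd (hcp_t t ht)) ⟨s, hs, rfl⟩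
      have hf_anti : ∀ s ∈ Icc (0:ℝ) T, ∀ t ∈ Icc (0:ℝ) T, s ≤ t → f t ≤ f s :=
        fun s hs t ht hst => csInf_le_csInf (runInf_bdd (hcp_t t ht)) (runInf_img_ne hs.1)
          (image_mono (Icc_subset_Icc_right hst))
      have hf_attain : ∀ t ∈ Icc (0:ℝ) T, ∃ u ∈ Icc 0 t, p u = f t := by
        intro t ht
        obtain ⟨u, hu, hval⟩ := isCompact_Icc.exists_sInf_image_eq (nonempty_Icc.2 ht.1) (hcp_t t ht)
        exact ⟨u, hu, hval.symm⟩
      have hf_cont : ContinuousOn f (Icc 0 T) := runInf_cont hT.le hcp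
      have hfT : f T = -x := by rw [← hInfx]; ring
      -- π s = η s + f s • α on [0, T]
      have hπ_eq : ∀ s ∈ Icc (0:ℝ) T, π s = η s + f s • α := by
        intro s hs
        have := hPeq s hs
        simp only [pitman] at this
        have e : sInf ((fun s => αv (π s)) '' Icc 0 s) = f s := rfl
        rw [← this, e]
        abel
      have hhf : ∀ s ∈ Icc (0:ℝ) T, h s = p s - 2 * f s := by
        intro s hs
        have e2 : h s = αv (η s) := rfl
        have e3 : p s = αv (π s) := rfl
        have e : p s = h s + 2 * f s := by
          rw [e3, hπ_eq s hs, map_add, map_smul, smul_eq_mul, hpair, e2]; ring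
        linarith
      have key : min x (m t) = -(f t) := by
        have h1 : -(f t) ≤ x := by
          have := hf_anti t ht T ⟨hT.le, le_refl T⟩ ht.2
          rw [hfT] at this; linarith
        have h2 : -(f t) ≤ m t := by
          refine le_csInf (runInf_img_ne ht.2) ?_
          rintro y ⟨s, hs, rfl⟩
          have hs0T : s ∈ Icc 0 T := ⟨ht.1.trans hs.1, hs.2⟩
          have e1 : f s ≤ p s := hf_le s hs0T s ⟨hs0T.1, le_refl s⟩
          have e2 : f s ≤ f t := hf_anti t ht s hs0T hs.1
          show -(f t) ≤ h s
          rw [hhf s hs0T]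
          linarith
        have h3 : min x (m t) ≤ -(f t) := by
          by_contra hlt
          push_neg at hlt
          have hx_lt : -(f t) < x := lt_of_lt_of_le hlt (min_le_left _ _)
          have hm_lt : -(f t) < m t := lt_of_lt_of_le hlt (min_le_right _ _)
          set W : Set ℝ := Icc t T ∩ f ⁻¹' {f t} with hW
          have hW_closed : IsClosed W :=
            (hf_cont.mono (Icc_subset_Icc_left ht.1)).preimage_isClosed_of_isClosed
              isClosed_Icc isClosed_singleton
          have hW_ne : W.Nonempty := ⟨t, ⟨le_refl t, ht.2⟩, rfl⟩
          have hW_bdd : BddAbove W := isCompact_Icc.bddAbove.mono inter_subset_left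
          set w := sSup W with hw_def
          have hw : w ∈ W := hW_closed.csSup_mem hW_ne hW_bdd
          have hw_mem : w ∈ Icc t T := hw.1
          have hfw : f w = f t := hw.2
          have hw0T : w ∈ Icc 0 T := ⟨ht.1.trans hw_mem.1, hw_mem.2⟩
          have hwT : w < T := by
            rcases eq_or_lt_of_le hw_mem.2 with heq | hlt'
            · exfalso; rw [heq, hfT] at hfw; linarith
            · exact hlt'
          have hfs_lt : ∀ s, w < s → s ≤ T → f s < f t := by
            intro s hws hsT
            have hs0T : s ∈ Icc 0 T := ⟨hw0T.1.trans hws.le, hsT⟩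
            have hle : f s ≤ f t := by
              have := hf_anti w hw0T s hs0T hws.le
              rw [hfw] at this; exact this
            rcases eq_or_lt_of_le hle with heq | hstrict
            · exfalso
              have hsW : s ∈ W := ⟨⟨hw_mem.1.trans hws.le, hsT⟩, heq⟩
              exact absurd (le_csSup hW_bdd hsW) (not_le.mpr hws)
            · exact hstrict
          have hpw_le : p w ≤ f t := by
            by_contra hgt
            push_neg at hgt
            obtain ⟨δ, hδ, hδ'⟩ := Metric.continuousWithinAt_iff.mp (hcp w hw0T)
              (p w - f t) (by linarith)
            set s := min (w + δ/2) T with hs_def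
            have hws : w < s := lt_min (by linarith) hwT
            have hsT : s ≤ T := min_le_right _ _
            have hfs := hfs_lt s hws hsT
            obtain ⟨q, hq, hpq⟩ := hf_attain s ⟨hw0T.1.trans hws.le, hsT⟩
            have hq_gt_w : w < q := by
              by_contra hqw
              push_neg at hqw
              have := hf_le w hw0T q ⟨hq.1, hqw⟩
              rw [hfw, hpq] at this; linarith
            have hq0T : q ∈ Icc 0 T := ⟨hq.1, hq.2.trans hsT⟩
            have hdist : dist q w < δ := by
              rw [Real.dist_eq, abs_lt]
              have e1 : q ≤ s := hq.2
              have e2 : s ≤ w + δ/2 := min_le_left _ _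
              constructor <;> linarith
            have hcl := hδ' hq0T hdist
            rw [Real.dist_eq, abs_lt, hpq] at hcl
            linarith [hcl.1]
          have hpw_ge : f w ≤ p w := hf_le w hw0T w ⟨hw0T.1, le_refl w⟩
          have hpw : p w = f t := le_antisymm hpw_le (hfw ▸ hpw_ge)
          have hmle : m t ≤ h w := csInf_le (runInf_bdd (hc_t t ht)) ⟨w, hw_mem, rfl⟩
          rw [hhf w hw0T, hpw, hfw] at hmle
          linarith
        exact le_antisymm h3 (le_min h1 h2)
      show π t = η t - min x (m t) • α
      rw [hπ_eq t ht, key]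
      simp [neg_smul, sub_neg_eq_add]
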